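/- Let K ≥ 1 be the number of neighborhoods with sizes n_1,…,n_K ≥ 1, m_k = C(n_k,2), M = ∑_{k=1}^K m_k ≥ 1, N = max_k n_k, let X = ∏_{k=1}^K {0,1}^{m_k}, and let p be an exponential-family pmf with local dependence on X. Let Θ₀ ⊆ ℝ^q be a nonempty set, θ̇ ∈ Θ₀, 𝛂 : ℝ^q → ℝ^d a map, b : X → ℝ^d a statistic, and μ̄ = ∑_x p(x)·b(x). Fix ε > 0, α₀ > 0, A₃ > 0, A₄ > 0, and let G = {x ∈ X : |⟨𝛂(θ̇), b(x) − μ̄⟩| < α₀·M}. Assume: (C3) for all θ₁, θ₂ ∈ Θ₀, |⟨𝛂(θ₁) − 𝛂(θ₂), b(x)⟩| ≤ A₃·‖θ₁ − θ₂‖₂·M for every x ∈ G, and |⟨𝛂(θ₁) − 𝛂(θ₂), μ̄⟩| ≤ A₃·‖θ₁ − θ₂‖₂·M; (C4) for all θ ∈ Θ₀ and all x, y ∈ X, |⟨𝛂(θ), b(x) − b(y)⟩| ≤ A₄·d(x,y)·N; (net) there exist θ_1,…,θ_L ∈ Θ₀ such that every θ ∈ Θ₀ satisfies ‖θ − θ_l‖₂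 < ε/(6·A₃) for some l. Then the probability under p of the event that there exists θ ∈ Θ₀ with |⟨𝛂(θ), b(X) − μ̄⟩| ≥ ε·M is at most 2·exp(−α₀²·M/(2·A₄²·N⁶)) + 2·L·exp(−ε²·M/(18·A₄²·N⁶)). -/

import Mathlib

open scoped BigOperators
open Finset

/-- The sample space of binary within-neighborhood edge variables. -/
abbrev Cfg (K : ℕ) (n : Fin K → ℕ) : Type :=
  (k : Fin K) → Fin (Nat.choose (n k) 2) → Bool

/-- Hamming distance between two configurations. -/
def hamDist {K : ℕ} {n : Fin K → ℕ} (x y : Cfg K n) : ℕ :=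
  ∑ k, (Finset.univ.filter (fun e => x k e ≠ y k e)).card


lemma mgf_one {F : Type*} [Fintype F] (w : F → ℝ) (hw0 : ∀ a, 0 ≤ w a)
    (hw1 : ∑ a, w a = 1) (Y : F → ℝ) (hY0 : ∑ a, w a * Y a = 0)
    (c : ℝ) (hYc : ∀ a, |Y a| ≤ c) (l : ℝ) :
    ∑ a, w a * Real.exp (l * Y a) ≤ Real.exp (l ^ 2 * c ^ 2 / 2) := by
  have hF : Nonempty F := by
    by_contra h
    rw [not_nonempty_iff] at h
    rw [Finset.univ_eq_empty] at hw1; simp at hw1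
  obtain ⟨a₀⟩ := hF
  have hc : 0 ≤ c := le_trans (abs_nonneg _) (hYc a₀)
  rcases hc.eq_or_lt with hc0 | hc0
  · have hY : ∀ a, Y a = 0 := fun a => abs_eq_zero.mp (le_antisymm (by rw [hc0]; exact hYc a) (abs_nonneg _))
    simp only [hY, mul_zero, Real.exp_zero, mul_one, hw1, ← hc0]
    simp
  · -- pointwise convexity bound
    have key : ∀ a, Real.exp (l * Y a) ≤
        (c + Y a) / (2 * c) * Real.exp (l * c) + (c - Y a) / (2 * c) * Real.exp (-(l * c)) := by
      intro a
      have h1 : 0 ≤ (c + Y a) / (2 * c) := by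
        apply div_nonneg _ (by linarith)
        have := (abs_le.mp (hYc a)).1; linarith
      have h2 : 0 ≤ (c - Y a) / (2 * c) := by
        apply div_nonneg _ (by linarith)
        have := (abs_le.mp (hYc a)).2; linarith
      have h3 : (c + Y a) / (2 * c) + (c - Y a) / (2 * c) = 1 := by
        field_simp; ring
      have := convexOn_exp.2 (Set.mem_univ (l * c)) (Set.mem_univ (-(l * c))) h1 h2 h3
      simp only [smul_eq_mul] at this
      have harg : (c + Y a) / (2 * c) * (l * c) + (c - Y a) / (2 * c) * -(l * c) = l * Y a := by
        field_simp; ring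
      rwa [harg] at this
    calc ∑ a, w a * Real.exp (l * Y a)
        ≤ ∑ a, w a * ((c + Y a) / (2 * c) * Real.exp (l * c) + (c - Y a) / (2 * c) * Real.exp (-(l * c))) := by
          apply Finset.sum_le_sum; intro a _
          exact mul_le_mul_of_nonneg_left (key a) (hw0 a)
      _ = (∑ a, w a * ((c + Y a) / (2 * c))) * Real.exp (l * c)
          + (∑ a, w a * ((c - Y a) / (2 * c))) * Real.exp (-(l * c)) := by
          rw [Finset.sum_mul, Finset.sum_mul, ← Finset.sum_add_distrib]
          congr 1; ext a; ring
      _ = (1 / 2) * Real.exp (l * c) + (1 / 2) * Real.exp (-(l * c)) := by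
          have e1 : ∑ a, w a * ((c + Y a) / (2 * c)) = 1 / 2 := by
            have : ∑ a, w a * ((c + Y a) / (2 * c))
                = ((∑ a, w a) * c + ∑ a, w a * Y a) / (2 * c) := by
              rw [Finset.sum_mul, ← Finset.sum_add_distrib, Finset.sum_div]
              congr 1; ext a; field_simp
            rw [this, hw1, hY0]; field_simp; ring
          have e2 : ∑ a, w a * ((c - Y a) / (2 * c)) = 1 / 2 := by
            have : ∑ a, w a * ((c - Y a) / (2 * c))
                = ((∑ a, w a) * c - ∑ a, w a * Y a) / (2 * c) := by
              rw [Finset.sum_mul, ← Finset.sum_sub_distrib, Finset.sum_div]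
              congr 1; ext a; field_simp
            rw [this, hw1, hY0]; field_simp; ring
          rw [e1, e2]
      _ = Real.cosh (l * c) := by rw [Real.cosh_eq]; ring
      _ ≤ Real.exp ((l * c) ^ 2 / 2) := Real.cosh_le_exp_half_sq _
      _ = Real.exp (l ^ 2 * c ^ 2 / 2) := by ring_nf


lemma mgf_prod : ∀ (K : ℕ) (F : Fin K → Type) (_ : ∀ k, Fintype (F k))
    (w : ∀ k, F k → ℝ), (∀ k a, 0 ≤ w k a) → (∀ k, ∑ a, w k a = 1) →
    ∀ (g : (∀ k, F k) → ℝ) (c : Fin K → ℝ),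
    (∀ (x : ∀ k, F k) (k : Fin K) (a a' : F k),
      |g (Function.update x k a) - g (Function.update x k a')| ≤ c k) →
    ∀ (l : ℝ),
    ∑ x : ∀ k, F k, (∏ k, w k (x k)) *
        Real.exp (l * (g x - ∑ y : ∀ k, F k, (∏ k, w k (y k)) * g y))
      ≤ Real.exp (l ^ 2 * (∑ k, c k ^ 2) / 2) := by
  intro K
  induction K with
  | zero =>
    intro F _ w hw0 hw1 g c hbd l
    simp
  | succ K ih =>
    intro F _inst w hw0 hw1 g c hbd l
    classical
    set e := Fin.consEquiv F with he
    -- rewrite sums over pi type as double sums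
    have sum_eq : ∀ (f : (∀ k, F k) → ℝ),
        ∑ x : ∀ k, F k, f x = ∑ a : F 0, ∑ x' : ∀ k : Fin K, F k.succ, f (Fin.cons a x') := by
      intro f
      rw [← Equiv.sum_comp e f, Fintype.sum_prod_type]
      rfl
    have prod_eq : ∀ (a : F 0) (x' : ∀ k : Fin K, F k.succ),
        (∏ k, w k (Fin.cons a x' k)) = w 0 a * ∏ k : Fin K, w k.succ (x' k) := by
      intro a x'
      rw [Fin.prod_univ_succ]
      simp
    set W' : (∀ k : Fin K, F k.succ) → ℝ := fun x' => ∏ k : Fin K, w k.succ (x' k) with hW'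
    have hW'0 : ∀ x', 0 ≤ W' x' := fun x' => Finset.prod_nonneg (fun k _ => hw0 _ _)
    set g' : (∀ k : Fin K, F k.succ) → ℝ := fun x' => ∑ a, w 0 a * g (Fin.cons a x') with hg'
    set μ : ℝ := ∑ y : ∀ k, F k, (∏ k, w k (y k)) * g y with hμ
    -- mean identity
    have hmean : μ = ∑ x' : ∀ k : Fin K, F k.succ, W' x' * g' x' := by
      rw [hμ, sum_eq]
      rw [Finset.sum_comm]
      congr 1; ext x'
      rw [hg', Finset.mul_sum]
      congr 1; ext a
      rw [prod_eq]; ring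
    -- bounded differences for g (cons a ·) in a, and for g'
    have hbd0 : ∀ (a a' : F 0) (x' : ∀ k : Fin K, F k.succ),
        |g (Fin.cons a x') - g (Fin.cons a' x')| ≤ c 0 := by
      intro a a' x'
      have h1 : Fin.cons a x' = Function.update (Fin.cons a x') 0 a := by
        rw [Fin.update_cons_zero]
      have h2 : Fin.cons a' x' = Function.update (Fin.cons a x') 0 a' := by
        rw [Fin.update_cons_zero]
      rw [h1, h2]
      exact hbd _ 0 a a'
    have hbd' : ∀ (x' : ∀ k : Fin K, F k.succ) (k : Fin K) (b b' : F k.succ),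
        |g' (Function.update x' k b) - g' (Function.update x' k b')| ≤ c k.succ := by
      intro x' k b b'
      rw [hg']
      have : (∑ a, w 0 a * g (Fin.cons a (Function.update x' k b)))
           - (∑ a, w 0 a * g (Fin.cons a (Function.update x' k b')))
           = ∑ a, w 0 a * (g (Fin.cons a (Function.update x' k b))
               - g (Fin.cons a (Function.update x' k b'))) := by
        rw [← Finset.sum_sub_distrib]; congr 1; ext a; ring
      rw [this]
      calc |∑ a, w 0 a * (g (Fin.cons a (Function.update x' k b))
               - g (Fin.cons a (Function.update x' k b')))|
          ≤ ∑ a, |w 0 a * (g (Fin.cons a (Function.update x' k b))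
               - g (Fin.cons a (Function.update x' k b')))| := Finset.abs_sum_le_sum_abs _ _
        _ ≤ ∑ a, w 0 a * c k.succ := by
            apply Finset.sum_le_sum; intro a _
            rw [abs_mul, abs_of_nonneg (hw0 0 a)]
            apply mul_le_mul_of_nonneg_left _ (hw0 0 a)
            rw [Fin.cons_update, Fin.cons_update]
            exact hbd (Fin.cons a x') k.succ b b'
        _ = c k.succ := by rw [← Finset.sum_mul, hw1 0, one_mul]
    -- main chain
    rw [sum_eq]
    have step : ∀ a x', (∏ k, w k (Fin.cons a x' k)) * Real.exp (l * (g (Fin.cons a x') - μ))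
        = W' x' * Real.exp (l * (g' x' - μ)) * (w 0 a * Real.exp (l * (g (Fin.cons a x') - g' x'))) := by
      intro a x'
      have hexp : Real.exp (l * (g' x' - μ)) * Real.exp (l * (g (Fin.cons a x') - g' x'))
          = Real.exp (l * (g (Fin.cons a x') - μ)) := by
        rw [← Real.exp_add]; congr 1; ring
      rw [prod_eq, ← hexp]; ring
    calc ∑ a : F 0, ∑ x' : ∀ k : Fin K, F k.succ,
          (∏ k, w k (Fin.cons a x' k)) * Real.exp (l * (g (Fin.cons a x') - μ))
        = ∑ x' : ∀ k : Fin K, F k.succ, W' x' * Real.exp (l * (g' x' - μ)) *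
            (∑ a, w 0 a * Real.exp (l * (g (Fin.cons a x') - g' x'))) := by
          rw [Finset.sum_comm]
          congr 1; ext x'
          rw [Finset.mul_sum]
          congr 1; ext a
          exact step a x'
      _ ≤ ∑ x' : ∀ k : Fin K, F k.succ, W' x' * Real.exp (l * (g' x' - μ)) *
            Real.exp (l ^ 2 * c 0 ^ 2 / 2) := by
          apply Finset.sum_le_sum; intro x' _
          apply mul_le_mul_of_nonneg_left _ (mul_nonneg (hW'0 x') (Real.exp_pos _).le)
          apply mgf_one (w 0) (hw0 0) (hw1 0) (fun a => g (Fin.cons a x') - g' x')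
          · have h1 : ∑ a, w 0 a * (g (Fin.cons a x') - g' x')
                = (∑ a, w 0 a * g (Fin.cons a x')) - (∑ a, w 0 a) * g' x' := by
              rw [Finset.sum_mul, ← Finset.sum_sub_distrib]
              congr 1; ext a; ring
            rw [h1, hw1 0, one_mul]
            simp [hg']
          · intro a
            have h2 : g (Fin.cons a x') - g' x'
                = ∑ a', w 0 a' * (g (Fin.cons a x') - g (Fin.cons a' x')) := by
              have h3 : ∑ a', w 0 a' * (g (Fin.cons a x') - g (Fin.cons a' x'))
                  = (∑ a', w 0 a') * g (Fin.cons a x')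
                    - ∑ a', w 0 a' * g (Fin.cons a' x') := by
                rw [Finset.sum_mul, ← Finset.sum_sub_distrib]
                congr 1; ext a'; ring
              rw [h3, hw1 0, one_mul]
            rw [h2]
            calc |∑ a', w 0 a' * (g (Fin.cons a x') - g (Fin.cons a' x'))|
                ≤ ∑ a', |w 0 a' * (g (Fin.cons a x') - g (Fin.cons a' x'))| :=
                  Finset.abs_sum_le_sum_abs _ _
              _ ≤ ∑ a', w 0 a' * c 0 := by
                  apply Finset.sum_le_sum; intro a' _
                  rw [abs_mul, abs_of_nonneg (hw0 0 a')]
                  exact mul_le_mul_of_nonneg_left (hbd0 a a' x') (hw0 0 a')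
              _ = c 0 := by rw [← Finset.sum_mul, hw1 0, one_mul]
      _ ≤ Real.exp (l ^ 2 * (∑ k : Fin K, c k.succ ^ 2) / 2) * Real.exp (l ^ 2 * c 0 ^ 2 / 2) := by
          rw [← Finset.sum_mul]
          apply mul_le_mul_of_nonneg_right _ (Real.exp_pos _).le
          rw [hmean]
          exact ih (fun k => F k.succ) (fun k => _inst k.succ) (fun k => w k.succ)
            (fun k => hw0 k.succ) (fun k => hw1 k.succ) g' (fun k => c k.succ) hbd' l
      _ = Real.exp (l ^ 2 * (∑ k : Fin (K+1), c k ^ 2) / 2) := by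
          rw [← Real.exp_add, Fin.sum_univ_succ]
          ring_nf


lemma chernoff_one {X : Type*} [Fintype X] (W : X → ℝ) (hW0 : ∀ x, 0 ≤ W x)
    (f : X → ℝ) (l t B : ℝ) (hl : 0 ≤ l) [DecidablePred fun x => t ≤ f x]
    (hmgf : ∑ x, W x * Real.exp (l * f x) ≤ B) :
    ∑ x ∈ Finset.univ.filter (fun x => t ≤ f x), W x ≤ Real.exp (-(l * t)) * B := by
  calc ∑ x ∈ Finset.univ.filter (fun x => t ≤ f x), W x
      ≤ ∑ x ∈ Finset.univ.filter (fun x => t ≤ f x),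
          W x * (Real.exp (-(l * t)) * Real.exp (l * f x)) := by
        apply Finset.sum_le_sum; intro x hx
        rw [Finset.mem_filter] at hx
        have h1 : (1 : ℝ) ≤ Real.exp (-(l * t)) * Real.exp (l * f x) := by
          rw [← Real.exp_add, ← Real.exp_zero]
          apply Real.exp_le_exp.mpr
          have := mul_le_mul_of_nonneg_left hx.2 hl
          nlinarith
        nlinarith [hW0 x, mul_le_mul_of_nonneg_left h1 (hW0 x)]
    _ ≤ ∑ x, W x * (Real.exp (-(l * t)) * Real.exp (l * f x)) := by
        apply Finset.sum_le_sum_of_subset_of_nonneg (Finset.filter_subset _ _)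
        intro x _ _
        exact mul_nonneg (hW0 x) (mul_nonneg (Real.exp_pos _).le (Real.exp_pos _).le)
    _ = Real.exp (-(l * t)) * ∑ x, W x * Real.exp (l * f x) := by
        rw [Finset.mul_sum]; congr 1; ext x; ring
    _ ≤ Real.exp (-(l * t)) * B := by
        exact mul_le_mul_of_nonneg_left hmgf (Real.exp_pos _).le

lemma tail_two (K : ℕ) (F : Fin K → Type) (inst : ∀ k, Fintype (F k))
    (w : ∀ k, F k → ℝ) (hw0 : ∀ k a, 0 ≤ w k a) (hw1 : ∀ k, ∑ a, w k a = 1)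
    (g : (∀ k, F k) → ℝ) (c : Fin K → ℝ)
    (hbd : ∀ (x : ∀ k, F k) (k : Fin K) (a a' : F k),
      |g (Function.update x k a) - g (Function.update x k a')| ≤ c k)
    (μ : ℝ) (hμ : μ = ∑ y : ∀ k, F k, (∏ k, w k (y k)) * g y)
    (t V : ℝ) (ht : 0 < t) (hV : 0 < V) (hcV : ∑ k, c k ^ 2 ≤ V)
    [DecidablePred fun x : ∀ k, F k => t ≤ |g x - μ|] :
    ∑ x ∈ Finset.univ.filter (fun x : ∀ k, F k => t ≤ |g x - μ|), (∏ k, w k (x k))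
      ≤ 2 * Real.exp (-(t ^ 2) / (2 * V)) := by
  classical
  set l : ℝ := t / V with hldef
  have hl : 0 ≤ l := div_nonneg ht.le hV.le
  have hW0 : ∀ x : ∀ k, F k, 0 ≤ ∏ k, w k (x k) :=
    fun x => Finset.prod_nonneg fun k _ => hw0 k (x k)
  have hBle : Real.exp (l ^ 2 * (∑ k, c k ^ 2) / 2) ≤ Real.exp (l ^ 2 * V / 2) := by
    apply Real.exp_le_exp.mpr
    have : 0 ≤ l ^ 2 := sq_nonneg l
    nlinarith
  have hfinal : Real.exp (-(l * t)) * Real.exp (l ^ 2 * V / 2)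
      = Real.exp (-(t ^ 2) / (2 * V)) := by
    rw [← Real.exp_add]
    congr 1
    rw [hldef]
    field_simp
    ring
  -- one-sided bounds
  have hup : ∑ x ∈ Finset.univ.filter (fun x : ∀ k, F k => t ≤ g x - μ), (∏ k, w k (x k))
      ≤ Real.exp (-(t ^ 2) / (2 * V)) := by
    rw [← hfinal]
    apply le_trans (chernoff_one _ hW0 (fun x => g x - μ) l t _ hl _)
    · exact mul_le_mul_of_nonneg_left hBle (Real.exp_pos _).le
    · rw [hμ]; exact mgf_prod K F inst w hw0 hw1 g c hbd l
  have hdn : ∑ x ∈ Finset.univ.filter (fun x : ∀ k, F k => t ≤ μ - g x), (∏ k, w k (x k))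
      ≤ Real.exp (-(t ^ 2) / (2 * V)) := by
    rw [← hfinal]
    apply le_trans (chernoff_one _ hW0 (fun x => μ - g x) l t _ hl _)
    · exact mul_le_mul_of_nonneg_left hBle (Real.exp_pos _).le
    · have hμ' : -μ = ∑ y : ∀ k, F k, (∏ k, w k (y k)) * (fun x => -g x) y := by
        simp only [mul_neg, Finset.sum_neg_distrib, hμ]
      have hbd' : ∀ (x : ∀ k, F k) (k : Fin K) (a a' : F k),
          |(fun x => -g x) (Function.update x k a) - (fun x => -g x) (Function.update x k a')| ≤ c k := by
        intro x k a a'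
        simp only [neg_sub_neg]
        rw [abs_sub_comm]
        exact hbd x k a a'
      have := mgf_prod K F inst w hw0 hw1 (fun x => -g x) c hbd' l
      rw [← hμ'] at this
      calc ∑ x : ∀ k, F k, (∏ k, w k (x k)) * Real.exp (l * (μ - g x))
          = ∑ x : ∀ k, F k, (∏ k, w k (x k)) * Real.exp (l * (-g x - -μ)) := by
            congr 1; ext x; ring_nf
        _ ≤ Real.exp (l ^ 2 * (∑ k, c k ^ 2) / 2) := this
  -- combine
  have hsub : Finset.univ.filter (fun x : ∀ k, F k => t ≤ |g x - μ|)
      ⊆ (Finset.univ.filter fun x : ∀ k, F k => t ≤ g x - μ)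
        ∪ (Finset.univ.filter fun x : ∀ k, F k => t ≤ μ - g x) := by
    intro x hx
    rw [Finset.mem_filter] at hx
    rcases abs_cases (g x - μ) with ⟨h, _⟩ | ⟨h, _⟩
    · apply Finset.mem_union_left; rw [Finset.mem_filter]
      exact ⟨Finset.mem_univ _, by rw [h] at hx; exact hx.2⟩
    · apply Finset.mem_union_right; rw [Finset.mem_filter]
      refine ⟨Finset.mem_univ _, ?_⟩
      have := hx.2; rw [h] at this; linarith
  calc ∑ x ∈ Finset.univ.filter (fun x : ∀ k, F k => t ≤ |g x - μ|), (∏ k, w k (x k))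
      ≤ ∑ x ∈ (Finset.univ.filter fun x : ∀ k, F k => t ≤ g x - μ)
          ∪ (Finset.univ.filter fun x : ∀ k, F k => t ≤ μ - g x), (∏ k, w k (x k)) :=
        Finset.sum_le_sum_of_subset_of_nonneg hsub (fun x _ _ => hW0 x)
    _ ≤ (∑ x ∈ Finset.univ.filter (fun x : ∀ k, F k => t ≤ g x - μ), (∏ k, w k (x k)))
        + ∑ x ∈ Finset.univ.filter (fun x : ∀ k, F k => t ≤ μ - g x), (∏ k, w k (x k)) := by
        have := Finset.sum_union_inter (s₁ := Finset.univ.filter fun x : ∀ k, F k => t ≤ g x - μ)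
          (s₂ := Finset.univ.filter fun x : ∀ k, F k => t ≤ μ - g x)
          (f := fun x => ∏ k, w k (x k))
        have hnn : 0 ≤ ∑ x ∈ (Finset.univ.filter fun x : ∀ k, F k => t ≤ g x - μ)
            ∩ (Finset.univ.filter fun x : ∀ k, F k => t ≤ μ - g x), (∏ k, w k (x k)) :=
          Finset.sum_nonneg fun x _ => hW0 x
        linarith
    _ ≤ 2 * Real.exp (-(t ^ 2) / (2 * V)) := by linarith

lemma sum_biUnion_le' {α β : Type*} [DecidableEq α] (t : Finset β)
    (S : β → Finset α) (f : α → ℝ) (hf : ∀ x, 0 ≤ f x) :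
    ∑ x ∈ t.biUnion S, f x ≤ ∑ l ∈ t, ∑ x ∈ S l, f x := by
  classical
  induction t using Finset.induction_on with
  | empty => simp
  | insert _ _ ha ih =>
    rename_i a t
    rw [Finset.biUnion_insert, Finset.sum_insert ha]
    have h1 : ∑ x ∈ S a ∪ t.biUnion S, f x ≤ (∑ x ∈ S a, f x) + ∑ x ∈ t.biUnion S, f x := by
      have := Finset.sum_union_inter (s₁ := S a) (s₂ := t.biUnion S) (f := f)
      have hnn : 0 ≤ ∑ x ∈ S a ∩ t.biUnion S, f x := Finset.sum_nonneg fun x _ => hf x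
      linarith
    linarith [ih]


set_option maxHeartbeats 1000000 in
/-- Finite-sample, explicit-constant instance of Proposition 2 of the paper
(uniform convergence of the estimating function over `Θ₀`): under the smoothness
conditions [C.3] (on the good event `G` and at `μ̄`) and [C.4], and with an
`ε/(6·A₃)`-net `θ_1, …, θ_L` of `Θ₀`, the probability that
`|⟨𝛂(θ), b(X) − μ̄⟩| ≥ ε·M` for some `θ ∈ Θ₀` is at most
`2·exp(−α₀²·M/(2·A₄²·N⁶)) + 2·L·exp(−ε²·M/(18·A₄²·N⁶))`. -/
theorem statement4
    (K : ℕ) (hK : 1 ≤ K)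
    (n : Fin K → ℕ) (hn : ∀ k, 1 ≤ n k)
    (hM : 1 ≤ ∑ k, Nat.choose (n k) 2)
    (Mr : ℝ) (hMr : Mr = ∑ k, ((Nat.choose (n k) 2 : ℝ)))
    (N : ℕ) (hNub : ∀ k, n k ≤ N) (hNmem : ∃ k, n k = N)
    (dk : Fin K → ℕ)
    (η : (k : Fin K) → Fin (dk k) → ℝ)
    (s : (k : Fin K) → (Fin (Nat.choose (n k) 2) → Bool) → Fin (dk k) → ℝ)
    (Z : ℝ)
    (hZ : Z = ∑ x : Cfg K n, Real.exp (∑ k, ∑ i, η k i * s k (x k) i))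
    (p : Cfg K n → ℝ)
    (hp : ∀ x, p x = Real.exp (∑ k, ∑ i, η k i * s k (x k) i) / Z)
    (q d : ℕ)
    (Θ₀ : Set (EuclideanSpace ℝ (Fin q))) (hΘ₀ : Θ₀.Nonempty)
    (θd : EuclideanSpace ℝ (Fin q)) (hθd : θd ∈ Θ₀)
    (al : EuclideanSpace ℝ (Fin q) → Fin d → ℝ)
    (b : Cfg K n → Fin d → ℝ)
    (μb : Fin d → ℝ) (hμb : ∀ i, μb i = ∑ x : Cfg K n, p x * b x i)
    (ε α₀ A₃ A₄ : ℝ)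
    (hε : 0 < ε) (hα₀ : 0 < α₀) (hA₃ : 0 < A₃) (hA₄ : 0 < A₄)
    (G : Set (Cfg K n))
    (hG : G = {x : Cfg K n | |∑ i, al θd i * (b x i - μb i)| < α₀ * Mr})
    -- smoothness condition [C.3]
    (hC3 : ∀ θ₁ ∈ Θ₀, ∀ θ₂ ∈ Θ₀,
      (∀ x ∈ G, |∑ i, (al θ₁ i - al θ₂ i) * b x i| ≤ A₃ * ‖θ₁ - θ₂‖ * Mr) ∧
      |∑ i, (al θ₁ i - al θ₂ i) * μb i| ≤ A₃ * ‖θ₁ - θ₂‖ * Mr)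
    -- smoothness condition [C.4]
    (hC4 : ∀ θ ∈ Θ₀, ∀ x y : Cfg K n,
      |∑ i, al θ i * (b x i - b y i)| ≤ A₄ * (hamDist x y : ℝ) * (N : ℝ))
    -- an ε/(6·A₃)-net of Θ₀
    (L : ℕ) (θs : Fin L → EuclideanSpace ℝ (Fin q))
    (hθs : ∀ l, θs l ∈ Θ₀)
    (hnet : ∀ θ ∈ Θ₀, ∃ l, ‖θ - θs l‖ < ε / (6 * A₃)) :
    (∑' x : {x : Cfg K n //
        ∃ θ ∈ Θ₀, ε * Mr ≤ |∑ i, al θ i * (b x i - μb i)|}, p x.1) ≤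
      2 * Real.exp (-(α₀ ^ 2 * Mr) / (2 * A₄ ^ 2 * (N : ℝ) ^ 6)) +
        2 * (L : ℝ) * Real.exp (-(ε ^ 2 * Mr) / (18 * A₄ ^ 2 * (N : ℝ) ^ 6)) := by
  classical
  -- basic positivity
  have hMr1 : (1 : ℝ) ≤ Mr := by
    rw [hMr]
    calc (1:ℝ) ≤ ((∑ k, Nat.choose (n k) 2 : ℕ) : ℝ) := by exact_mod_cast hM
      _ = ∑ k, ((Nat.choose (n k) 2 : ℝ)) := by push_cast; rfl
  have hMr0 : 0 < Mr := lt_of_lt_of_le one_pos hMr1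
  have hN1 : 1 ≤ N := by obtain ⟨k0, hk0⟩ := hNmem; exact hk0 ▸ hn k0
  have hNr1 : (1 : ℝ) ≤ (N : ℝ) := by exact_mod_cast hN1
  have hNr0 : (0 : ℝ) < (N : ℝ) := lt_of_lt_of_le one_pos hNr1
  -- the product structure
  set F : Fin K → Type := fun k => (Fin (Nat.choose (n k) 2) → Bool) with hF
  set Ek : ∀ k, F k → ℝ := fun k a => Real.exp (∑ i, η k i * s k a i) with hEk
  set Zk : Fin K → ℝ := fun k => ∑ a, Ek k a with hZk
  have hZk0 : ∀ k, 0 < Zk k := by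
    intro k
    apply Finset.sum_pos (fun a _ => Real.exp_pos _)
    exact Finset.univ_nonempty
  set w : ∀ k, F k → ℝ := fun k a => Ek k a / Zk k with hw
  have hw0 : ∀ k a, 0 ≤ w k a := fun k a => div_nonneg (Real.exp_pos _).le (hZk0 k).le
  have hw1 : ∀ k, ∑ a, w k a = 1 := by
    intro k
    rw [hw]
    simp only
    rw [← Finset.sum_div]
    exact div_self (hZk0 k).ne'
  have hZprod : Z = ∏ k, Zk k := by
    rw [hZ]
    have : ∀ x : Cfg K n, Real.exp (∑ k, ∑ i, η k i * s k (x k) i)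
        = ∏ k, Ek k (x k) := by
      intro x; rw [Real.exp_sum]
    simp_rw [this]
    rw [← Fintype.prod_sum]
  have hp' : ∀ x : Cfg K n, p x = ∏ k, w k (x k) := by
    intro x
    rw [hp, hZprod, Real.exp_sum, hw]
    simp only
    rw [Finset.prod_div_distrib]
  have hp0 : ∀ x, 0 ≤ p x := by
    intro x; rw [hp' x]; exact Finset.prod_nonneg fun k _ => hw0 k (x k)
  -- statistic and mean
  set g : EuclideanSpace ℝ (Fin q) → Cfg K n → ℝ := fun θ x => ∑ i, al θ i * b x i with hg
  set μf : EuclideanSpace ℝ (Fin q) → ℝ := fun θ => ∑ i, al θ i * μb i with hμf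
  have hfg : ∀ θ (x : Cfg K n), ∑ i, al θ i * (b x i - μb i) = g θ x - μf θ := by
    intro θ x
    rw [hg, hμf]
    simp only
    rw [← Finset.sum_sub_distrib]
    congr 1; ext i; ring
  have hmean : ∀ θ, μf θ = ∑ y : Cfg K n, (∏ k, w k (y k)) * g θ y := by
    intro θ
    have : ∀ y : Cfg K n, (∏ k, w k (y k)) * g θ y = ∑ i, al θ i * (p y * b y i) := by
      intro y
      rw [← hp' y, hg]
      simp only
      rw [Finset.mul_sum]
      congr 1; ext i; ring
    simp_rw [this]
    rw [Finset.sum_comm, hμf]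
    simp only
    congr 1; ext i
    rw [hμb i, Finset.mul_sum]
  -- bounded differences
  set c : Fin K → ℝ := fun k => A₄ * (N : ℝ) * (Nat.choose (n k) 2 : ℝ) with hc
  have hbd : ∀ θ ∈ Θ₀, ∀ (x : Cfg K n) (k : Fin K) (a a' : F k),
      |g θ (Function.update x k a) - g θ (Function.update x k a')| ≤ c k := by
    intro θ hθ x k a a'
    set u : Cfg K n := Function.update x k a with hu
    set v : Cfg K n := Function.update x k a' with hv
    have hgd : g θ u - g θ v = ∑ i, al θ i * (b u i - b v i) := by
      rw [hg]
      simp only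
      rw [← Finset.sum_sub_distrib]
      congr 1; ext i; ring
    have hham : (hamDist u v : ℝ) ≤ (Nat.choose (n k) 2 : ℝ) := by
      have : hamDist u v ≤ Nat.choose (n k) 2 := by
        rw [hamDist]
        rw [Finset.sum_eq_single k]
        · calc (Finset.univ.filter (fun e => u k e ≠ v k e)).card
              ≤ (Finset.univ : Finset (Fin (Nat.choose (n k) 2))).card :=
                Finset.card_le_card (Finset.filter_subset _ _)
            _ = Nat.choose (n k) 2 := by simp
        · intro k' _ hk'
          have h1 : u k' = x k' := Function.update_of_ne hk' _ _
          have h2 : v k' = x k' := Function.update_of_ne hk' _ _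
          rw [h1, h2]
          simp
        · intro h; exact absurd (Finset.mem_univ k) h
      exact_mod_cast this
    rw [hgd]
    calc |∑ i, al θ i * (b u i - b v i)| ≤ A₄ * (hamDist u v : ℝ) * (N : ℝ) :=
        hC4 θ hθ u v
      _ = (A₄ * (N : ℝ)) * (hamDist u v : ℝ) := by ring
      _ ≤ (A₄ * (N : ℝ)) * (Nat.choose (n k) 2 : ℝ) :=
          mul_le_mul_of_nonneg_left hham (by positivity)
      _ = c k := by rw [hc]
  -- variance proxy
  set V : ℝ := A₄ ^ 2 * (N : ℝ) ^ 4 * Mr with hV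
  have hV0 : 0 < V := by positivity
  have hcV : ∑ k, c k ^ 2 ≤ V := by
    rw [hc, hV, hMr]
    simp only
    rw [Finset.mul_sum]
    apply Finset.sum_le_sum
    intro k _
    have hmk : ((Nat.choose (n k) 2 : ℝ)) ≤ (N : ℝ) ^ 2 := by
      have h1 : Nat.choose (n k) 2 ≤ N ^ 2 :=
        le_trans (Nat.choose_le_pow (n k) 2) (Nat.pow_le_pow_left (hNub k) 2)
      exact_mod_cast h1
    have hmk0 : (0 : ℝ) ≤ ((Nat.choose (n k) 2 : ℝ)) := Nat.cast_nonneg _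
    have hsq : ((Nat.choose (n k) 2 : ℝ)) ^ 2 ≤ (N : ℝ) ^ 2 * (Nat.choose (n k) 2 : ℝ) := by
      nlinarith
    calc (A₄ * (N : ℝ) * (Nat.choose (n k) 2 : ℝ)) ^ 2
        = A₄ ^ 2 * (N : ℝ) ^ 2 * ((Nat.choose (n k) 2 : ℝ)) ^ 2 := by ring
      _ ≤ A₄ ^ 2 * (N : ℝ) ^ 2 * ((N : ℝ) ^ 2 * (Nat.choose (n k) 2 : ℝ)) :=
          mul_le_mul_of_nonneg_left hsq (by positivity)
      _ = A₄ ^ 2 * (N : ℝ) ^ 4 * (Nat.choose (n k) 2 : ℝ) := by ring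
  -- the tail bound for a fixed θ ∈ Θ₀
  have tail : ∀ θ ∈ Θ₀, ∀ t : ℝ, 0 < t →
      ∑ x ∈ Finset.univ.filter (fun x : Cfg K n => t ≤ |∑ i, al θ i * (b x i - μb i)|), p x
        ≤ 2 * Real.exp (-(t ^ 2) / (2 * V)) := by
    intro θ hθ t ht
    have : ∀ x : Cfg K n, (t ≤ |∑ i, al θ i * (b x i - μb i)|) = (t ≤ |g θ x - μf θ|) := by
      intro x; rw [hfg]
    simp_rw [this, hp']
    exact tail_two K F (fun k => inferInstance) w hw0 hw1 (g θ) c (hbd θ hθ)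
      (μf θ) (hmean θ) t V ht hV0 hcV
  -- event decomposition
  set P : Cfg K n → Prop := fun x => ∃ θ ∈ Θ₀, ε * Mr ≤ |∑ i, al θ i * (b x i - μb i)| with hP
  set S0 : Finset (Cfg K n) := Finset.univ.filter
    (fun x => α₀ * Mr ≤ |∑ i, al θd i * (b x i - μb i)|) with hS0
  set Sl : Fin L → Finset (Cfg K n) := fun l => Finset.univ.filter
    (fun x => 2 * ε * Mr / 3 ≤ |∑ i, al (θs l) i * (b x i - μb i)|) with hSl
  have hdecomp : Finset.univ.filter P ⊆ S0 ∪ Finset.univ.biUnion Sl := by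
    intro x hx
    rw [Finset.mem_filter] at hx
    obtain ⟨-, θ, hθ, hxθ⟩ := hx
    by_cases hx0 : α₀ * Mr ≤ |∑ i, al θd i * (b x i - μb i)|
    · apply Finset.mem_union_left
      rw [hS0, Finset.mem_filter]
      exact ⟨Finset.mem_univ _, hx0⟩
    · apply Finset.mem_union_right
      have hxG : x ∈ G := by rw [hG]; exact not_le.mp hx0
      obtain ⟨l, hl⟩ := hnet θ hθ
      apply Finset.mem_biUnion.mpr
      refine ⟨l, Finset.mem_univ _, ?_⟩
      rw [hSl, Finset.mem_filter]
      refine ⟨Finset.mem_univ _, ?_⟩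
      -- approximation
      have hkey : |(∑ i, al θ i * (b x i - μb i)) - ∑ i, al (θs l) i * (b x i - μb i)|
          < ε * Mr / 3 := by
        have hsplit : (∑ i, al θ i * (b x i - μb i)) - ∑ i, al (θs l) i * (b x i - μb i)
            = (∑ i, (al θ i - al (θs l) i) * b x i)
              - ∑ i, (al θ i - al (θs l) i) * μb i := by
          rw [← Finset.sum_sub_distrib, ← Finset.sum_sub_distrib]
          congr 1; ext i; ring
        rw [hsplit]
        obtain ⟨hC3a, hC3b⟩ := hC3 θ hθ (θs l) (hθs l)
        have h1 := hC3a x hxG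
        have h2 := hC3b
        have hbound : A₃ * ‖θ - θs l‖ * Mr < A₃ * (ε / (6 * A₃)) * Mr := by
          apply mul_lt_mul_of_pos_right _ hMr0
          exact mul_lt_mul_of_pos_left hl hA₃
        have heq : A₃ * (ε / (6 * A₃)) * Mr = ε * Mr / 6 := by field_simp
        calc |(∑ i, (al θ i - al (θs l) i) * b x i)
              - ∑ i, (al θ i - al (θs l) i) * μb i|
            ≤ |∑ i, (al θ i - al (θs l) i) * b x i|
              + |∑ i, (al θ i - al (θs l) i) * μb i| := abs_sub _ _
          _ < ε * Mr / 3 := by rw [heq] at hbound; linarith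
      have habs : |∑ i, al θ i * (b x i - μb i)| - |∑ i, al (θs l) i * (b x i - μb i)|
          ≤ |(∑ i, al θ i * (b x i - μb i)) - ∑ i, al (θs l) i * (b x i - μb i)| :=
        abs_sub_abs_le_abs_sub _ _
      linarith
  -- sum over the event
  have htsum : (∑' x : {x : Cfg K n // P x}, p x.1) = ∑ x ∈ Finset.univ.filter P, p x := by
    rw [tsum_fintype]
    exact (Finset.sum_subtype _ (fun x => by simp [hP]) p).symm
  rw [htsum]
  have step1 : ∑ x ∈ Finset.univ.filter P, p x
      ≤ (∑ x ∈ S0, p x) + ∑ l, ∑ x ∈ Sl l, p x := by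
    calc ∑ x ∈ Finset.univ.filter P, p x
        ≤ ∑ x ∈ S0 ∪ Finset.univ.biUnion Sl, p x :=
          Finset.sum_le_sum_of_subset_of_nonneg hdecomp (fun x _ _ => hp0 x)
      _ ≤ (∑ x ∈ S0, p x) + ∑ x ∈ Finset.univ.biUnion Sl, p x := by
          have := Finset.sum_union_inter (s₁ := S0) (s₂ := Finset.univ.biUnion Sl) (f := p)
          have hnn : 0 ≤ ∑ x ∈ S0 ∩ Finset.univ.biUnion Sl, p x :=
            Finset.sum_nonneg fun x _ => hp0 x
          linarith
      _ ≤ (∑ x ∈ S0, p x) + ∑ l, ∑ x ∈ Sl l, p x := by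
          have := sum_biUnion_le' Finset.univ Sl p hp0
          linarith
  -- bound each piece
  have hS0bound : ∑ x ∈ S0, p x ≤ 2 * Real.exp (-(α₀ ^ 2 * Mr) / (2 * A₄ ^ 2 * (N : ℝ) ^ 6)) := by
    have h1 := tail θd hθd (α₀ * Mr) (by positivity)
    rw [hS0]
    apply le_trans h1
    have hexp : -((α₀ * Mr) ^ 2) / (2 * V) ≤ -(α₀ ^ 2 * Mr) / (2 * A₄ ^ 2 * (N : ℝ) ^ 6) := by
      have hpos1 : (0:ℝ) < 2 * A₄ ^ 2 * (N : ℝ) ^ 6 := by positivity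
      have hpos2 : (0:ℝ) < 2 * V := by positivity
      have h : (α₀ ^ 2 * Mr) / (2 * A₄ ^ 2 * (N : ℝ) ^ 6) ≤ (α₀ * Mr) ^ 2 / (2 * V) := by
        rw [div_le_div_iff₀ hpos1 hpos2, hV]
        have hN46 : (N : ℝ) ^ 4 ≤ (N : ℝ) ^ 6 := pow_le_pow_right₀ hNr1 (by norm_num)
        have key := mul_le_mul_of_nonneg_left hN46
          (show (0:ℝ) ≤ 2 * α₀ ^ 2 * A₄ ^ 2 * Mr ^ 2 by positivity)
        nlinarith [key]
      rw [neg_div, neg_div]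
      exact neg_le_neg h
    have := Real.exp_le_exp.mpr hexp
    linarith
  have hSlbound : ∀ l, ∑ x ∈ Sl l, p x
      ≤ 2 * Real.exp (-(ε ^ 2 * Mr) / (18 * A₄ ^ 2 * (N : ℝ) ^ 6)) := by
    intro l
    have h1 := tail (θs l) (hθs l) (2 * ε * Mr / 3) (by positivity)
    rw [hSl]
    apply le_trans h1
    have hexp : -((2 * ε * Mr / 3) ^ 2) / (2 * V)
        ≤ -(ε ^ 2 * Mr) / (18 * A₄ ^ 2 * (N : ℝ) ^ 6) := by
      have hpos1 : (0:ℝ) < 18 * A₄ ^ 2 * (N : ℝ) ^ 6 := by positivity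
      have hpos2 : (0:ℝ) < 2 * V := by positivity
      have h : (ε ^ 2 * Mr) / (18 * A₄ ^ 2 * (N : ℝ) ^ 6) ≤ (2 * ε * Mr / 3) ^ 2 / (2 * V) := by
        rw [div_le_div_iff₀ hpos1 hpos2, hV]
        have hN46 : (N : ℝ) ^ 4 ≤ (N : ℝ) ^ 6 := pow_le_pow_right₀ hNr1 (by norm_num)
        have key := mul_le_mul_of_nonneg_left hN46
          (show (0:ℝ) ≤ 2 * ε ^ 2 * A₄ ^ 2 * Mr ^ 2 by positivity)
        nlinarith [key]
      rw [neg_div, neg_div]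
      exact neg_le_neg h
    have := Real.exp_le_exp.mpr hexp
    linarith
  have hsumL : ∑ l, ∑ x ∈ Sl l, p x
      ≤ 2 * (L : ℝ) * Real.exp (-(ε ^ 2 * Mr) / (18 * A₄ ^ 2 * (N : ℝ) ^ 6)) := by
    calc ∑ l, ∑ x ∈ Sl l, p x
        ≤ ∑ _l : Fin L, 2 * Real.exp (-(ε ^ 2 * Mr) / (18 * A₄ ^ 2 * (N : ℝ) ^ 6)) :=
          Finset.sum_le_sum fun l _ => hSlbound l
      _ = 2 * (L : ℝ) * Real.exp (-(ε ^ 2 * Mr) / (18 * A₄ ^ 2 * (N : ℝ) ^ 6)) := by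
          rw [Finset.sum_const, Finset.card_univ, Fintype.card_fin, nsmul_eq_mul]
          ring
  linarith [step1, hS0bound, hsumL]
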